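/- Let ψ(y) = {y} − 1/2 if y ∉ ℤ and ψ(y) = 0 if y ∈ ℤ. Then for every positive integer K and every real y, |∑_{k=1}^K sin(2πky)/(πk) + ψ(y)| ≤ min(1/2, 1/((2K+1)π |sin(πy)|)). -/

import Mathlib

open scoped Classical

/-- The sawtooth function: `ψ(y) = {y} - 1/2` for `y ∉ ℤ`, and `ψ(y) = 0` for `y ∈ ℤ`. -/
noncomputable def sawtooth (y : ℝ) : ℝ :=
  if ∃ m : ℤ, y = (m : ℝ) then 0 else Int.fract y - 1 / 2

open Real Finset

noncomputable def SS (K : ℕ) (y : ℝ) : ℝ :=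
  ∑ k ∈ Finset.Icc 1 K, Real.sin (2 * Real.pi * k * y) / (Real.pi * k)

noncomputable def DD (K : ℕ) (t : ℝ) : ℝ :=
  1 + 2 * ∑ k ∈ Finset.Icc 1 K, Real.cos (2 * Real.pi * k * t)

lemma hasDerivAt_A (K : ℕ) (t : ℝ) :
    HasDerivAt (fun s => s + SS K s) (DD K t) t := by
  have h : ∀ k ∈ Finset.Icc 1 K,
      HasDerivAt (fun s => Real.sin (2 * Real.pi * k * s) / (Real.pi * k))
        (2 * Real.cos (2 * Real.pi * k * t)) t := by
    intro k hk
    have hk1 : (1:ℕ) ≤ k := (Finset.mem_Icc.mp hk).1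
    have hkpos : (0:ℝ) < k := by exact_mod_cast hk1
    have h1 : HasDerivAt (fun s : ℝ => 2 * Real.pi * k * s) (2 * Real.pi * k) t := by
      simpa using (hasDerivAt_id t).const_mul (2 * Real.pi * k)
    have h2 : HasDerivAt (fun s => Real.sin (2 * Real.pi * k * s))
        (Real.cos (2 * Real.pi * k * t) * (2 * Real.pi * k)) t :=
      (Real.hasDerivAt_sin _).comp t h1
    have := h2.div_const (Real.pi * k)
    refine this.congr_deriv ?_
    field_simp
  have hsum := HasDerivAt.fun_sum h
  have := (hasDerivAt_id t).add hsum
  refine this.congr_deriv ?_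
  unfold DD
  rw [Finset.mul_sum]

lemma kernel (K : ℕ) (t : ℝ) :
    Real.sin (Real.pi * t) * DD K t = Real.sin ((2 * K + 1) * Real.pi * t) := by
  set u : ℕ → ℝ := fun j => Real.sin ((2 * (j:ℝ) + 1) * Real.pi * t) with hu
  have tel : ∑ k ∈ Finset.Icc 1 K, (2 * Real.sin (Real.pi * t) * Real.cos (2 * Real.pi * k * t))
      = Real.sin ((2 * K + 1) * Real.pi * t) - Real.sin (Real.pi * t) := by
    have hIcc : Finset.Icc 1 K = Finset.Ico 1 (K + 1) := by
      ext x; simp [Nat.lt_succ_iff]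
    rw [hIcc, Finset.sum_Ico_eq_sum_range]
    simp only [Nat.add_sub_cancel]
    have key : ∀ i ∈ Finset.range K,
        2 * Real.sin (Real.pi * t) * Real.cos (2 * Real.pi * (↑(1 + i)) * t)
        = u (i + 1) - u i := by
      intro i _
      rw [hu]
      simp only
      push_cast
      rw [Real.sin_sub_sin]
      rw [show ((2 * ((i:ℝ) + 1) + 1) * Real.pi * t - (2 * (i:ℝ) + 1) * Real.pi * t) / 2
          = Real.pi * t by ring,
        show ((2 * ((i:ℝ) + 1) + 1) * Real.pi * t + (2 * (i:ℝ) + 1) * Real.pi * t) / 2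
          = 2 * Real.pi * (1 + (i:ℝ)) * t by ring]
    rw [Finset.sum_congr rfl key, Finset.sum_range_sub u K]
    rw [hu]
    simp only
    push_cast
    norm_num
  unfold DD
  rw [mul_add, mul_one,
    show Real.sin (Real.pi * t) * (2 * ∑ k ∈ Finset.Icc 1 K, Real.cos (2 * Real.pi * k * t))
      = (2 * Real.sin (Real.pi * t)) * ∑ k ∈ Finset.Icc 1 K, Real.cos (2 * Real.pi * k * t) by ring,
    Finset.mul_sum, tel]
  ring

lemma cont_DD (K : ℕ) : Continuous (DD K) := by
  unfold DD; fun_prop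

lemma ftc (K : ℕ) (a b : ℝ) :
    ∫ t in a..b, DD K t = (b + SS K b) - (a + SS K a) :=
  intervalIntegral.integral_eq_sub_of_hasDerivAt (fun t _ => hasDerivAt_A K t)
    ((cont_DD K).intervalIntegrable a b)

lemma SS_zero (K : ℕ) : SS K 0 = 0 := by unfold SS; simp

lemma SS_half (K : ℕ) : SS K (1/2) = 0 := by
  unfold SS
  apply Finset.sum_eq_zero; intro k hk
  rw [show 2 * Real.pi * (k:ℝ) * (1/2) = ((k:ℤ):ℝ) * Real.pi by push_cast; ring,
    Real.sin_int_mul_pi]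
  simp

lemma bound1_small (K : ℕ) (y : ℝ) (h0 : 0 < y) (hy : y * ((2*K+1) * Real.pi) ≤ 1) :
    |y - 1/2 + SS K y| ≤ 1/2 := by
  set c : ℝ := (2*K+1) * Real.pi with hc
  have hKc : (1:ℝ) ≤ 2*(K:ℝ)+1 := by
    have hKn : (0:ℝ) ≤ (K:ℝ) := Nat.cast_nonneg K
    linarith
  have hcpos : 0 < c := by positivity
  have hc3 : 3 ≤ c := by
    have := Real.pi_gt_three
    nlinarith
  have hy2 : y < 1/2 := by nlinarith
  have hI : ∫ t in (0:ℝ)..y, DD K t = y + SS K y := by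
    rw [ftc]; simp [SS_zero]
  have hnonneg : ∀ t ∈ Set.Icc (0:ℝ) y, 0 ≤ DD K t := by
    intro t ht
    rcases eq_or_lt_of_le ht.1 with h | h
    · have : DD K 0 = 1 + 2*K := by
        unfold DD; simp
      rw [← h, this]; positivity
    · have hst : 0 < Real.sin (Real.pi * t) := by
        apply Real.sin_pos_of_pos_of_lt_pi
        · positivity
        · nlinarith [ht.2, Real.pi_pos]
      have hker := kernel K t
      have hct1 : (2*(K:ℝ)+1) * Real.pi * t ≤ 1 := by
        calc (2*(K:ℝ)+1) * Real.pi * t = t * c := by rw [hc]; ring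
        _ ≤ y * c := by nlinarith [ht.2]
        _ ≤ 1 := hy
      have hsct : 0 ≤ Real.sin ((2*K+1) * Real.pi * t) := by
        apply Real.sin_nonneg_of_nonneg_of_le_pi
        · positivity
        · exact hct1.trans (by linarith [Real.pi_gt_three])
      nlinarith [hker, hst, hsct]
  have hle : ∀ t ∈ Set.Icc (0:ℝ) y, DD K t ≤ c/2 := by
    intro t ht
    rcases eq_or_lt_of_le ht.1 with h | h
    · have hD : DD K 0 = 1 + 2*K := by unfold DD; simp
      rw [← h, hD]
      have := Real.pi_gt_three
      rw [hc]; nlinarith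
    · have hst : 0 < Real.sin (Real.pi * t) := by
        apply Real.sin_pos_of_pos_of_lt_pi
        · positivity
        · nlinarith [ht.2, Real.pi_pos]
      have hker := kernel K t
      have h1 : Real.sin ((2*K+1) * Real.pi * t) ≤ (2*K+1) * Real.pi * t := by
        apply Real.sin_le; positivity
      have h2 : 2 * t ≤ Real.sin (Real.pi * t) := by
        have := Real.mul_le_sin (x := Real.pi * t) (by positivity)
          (by nlinarith [ht.2, Real.pi_pos])
        have hpi := Real.pi_pos
        calc 2 * t = 2 / Real.pi * (Real.pi * t) := by field_simp
        _ ≤ Real.sin (Real.pi * t) := this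
      nlinarith [hker, hst, h1, h2]
  have hint : IntervalIntegrable (DD K) MeasureTheory.volume 0 y := (cont_DD K).intervalIntegrable 0 y
  have h1 : 0 ≤ ∫ t in (0:ℝ)..y, DD K t :=
    intervalIntegral.integral_nonneg h0.le hnonneg
  have h2 : (∫ t in (0:ℝ)..y, DD K t) ≤ c/2 * y := by
    have hmono := intervalIntegral.integral_mono_on h0.le hint
      (intervalIntegrable_const (c := c/2)) hle
    rw [intervalIntegral.integral_const, smul_eq_mul] at hmono
    linarith [hmono]
  rw [abs_le]
  constructor <;> nlinarith [hI, h1, h2]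

lemma geom (θ r : ℝ) : ∀ K : ℕ,
    (1 - 2*r*Real.cos θ + r^2) * (∑ k ∈ Finset.Icc 1 K, r^(k-1) * Real.sin (k*θ))
      = Real.sin θ - r^K * Real.sin (((K:ℝ)+1)*θ) + r^(K+1) * Real.sin ((K:ℝ)*θ) := by
  intro K
  induction K with
  | zero => simp
  | succ n ih =>
    rw [Finset.sum_Icc_succ_top (by omega : 1 ≤ n + 1), mul_add, ih, Nat.add_sub_cancel]
    have c1 : ((n+1 : ℕ):ℝ) = (n:ℝ)+1 := by push_cast; ring
    rw [c1]
    have key : Real.sin (((n:ℝ)+1+1)*θ) + Real.sin ((n:ℝ)*θ)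
        = 2 * Real.sin (((n:ℝ)+1)*θ) * Real.cos θ := by
      rw [show ((n:ℝ)+1+1)*θ = ((n:ℝ)+1)*θ + θ by ring,
        show (n:ℝ)*θ = ((n:ℝ)+1)*θ - θ by ring, Real.sin_add, Real.sin_sub]
      ring
    linear_combination (r^(n+1)) * key

lemma base_int (θ : ℝ) (h1 : 0 < θ) (h2 : θ < Real.pi) :
    ∫ r in (0:ℝ)..1, Real.sin θ / (1 - 2*r*Real.cos θ + r^2) = Real.pi/2 - θ/2 := by
  have hs : 0 < Real.sin θ := Real.sin_pos_of_pos_of_lt_pi h1 h2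
  have hQ : ∀ r : ℝ, 0 < 1 - 2*r*Real.cos θ + r^2 := by
    intro r
    nlinarith [sq_nonneg (r - Real.cos θ), Real.sin_sq_add_cos_sq θ, hs]
  have hderiv : ∀ r ∈ Set.uIcc (0:ℝ) 1,
      HasDerivAt (fun s => Real.arctan ((s - Real.cos θ)/Real.sin θ))
        (Real.sin θ / (1 - 2*r*Real.cos θ + r^2)) r := by
    intro r _
    have h1' : HasDerivAt (fun s : ℝ => (s - Real.cos θ)/Real.sin θ) (1/Real.sin θ) r := by
      simpa using ((hasDerivAt_id r).sub_const (Real.cos θ)).div_const (Real.sin θ)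
    have h2' := (Real.hasDerivAt_arctan ((r - Real.cos θ)/Real.sin θ)).comp r h1'
    refine h2'.congr_deriv ?_
    symm
    have hpy := Real.sin_sq_add_cos_sq θ
    have hQr := (hQ r).ne'
    have hsne := hs.ne'
    have he : 1 + ((r - Real.cos θ)/Real.sin θ)^2
        = (1 - 2*r*Real.cos θ + r^2)/Real.sin θ^2 := by
      field_simp
      linear_combination hpy
    rw [he, one_div_div]
    field_simp
  have hcont : Continuous fun r : ℝ => Real.sin θ / (1 - 2*r*Real.cos θ + r^2) :=
    Continuous.div continuous_const (by fun_prop) (fun r => (hQ r).ne')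
  rw [intervalIntegral.integral_eq_sub_of_hasDerivAt hderiv (hcont.intervalIntegrable 0 1)]
  have e0 : Real.arctan (((0:ℝ) - Real.cos θ)/Real.sin θ) = θ - Real.pi/2 := by
    have ht : ((0:ℝ) - Real.cos θ)/Real.sin θ = Real.tan (θ - Real.pi/2) := by
      rw [Real.tan_eq_sin_div_cos, Real.sin_sub, Real.cos_sub]
      simp
    rw [ht, Real.arctan_tan (by linarith) (by linarith)]
  have e1 : Real.arctan (((1:ℝ) - Real.cos θ)/Real.sin θ) = θ/2 := by
    have hs2 : 0 < Real.sin (θ/2) :=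
      Real.sin_pos_of_pos_of_lt_pi (by linarith) (by linarith [Real.pi_pos])
    have hc2 : 0 < Real.cos (θ/2) :=
      Real.cos_pos_of_mem_Ioo ⟨by linarith [Real.pi_pos], by linarith⟩
    have hsin : Real.sin θ = 2*Real.sin (θ/2)*Real.cos (θ/2) := by
      have := Real.sin_two_mul (θ/2)
      rwa [show 2*(θ/2) = θ by ring] at this
    have hcos : Real.cos θ = 2*Real.cos (θ/2)^2 - 1 := by
      have := Real.cos_two_mul (θ/2)
      rwa [show 2*(θ/2) = θ by ring] at this
    have ht : ((1:ℝ) - Real.cos θ)/Real.sin θ = Real.tan (θ/2) := by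
      rw [Real.tan_eq_sin_div_cos, hsin, hcos]
      have h11 : Real.sin (θ/2)^2 + Real.cos (θ/2)^2 = 1 := Real.sin_sq_add_cos_sq (θ/2)
      field_simp
      nlinarith [h11]
    rw [ht, Real.arctan_tan (by linarith [Real.pi_pos]) (by linarith)]
  rw [e0, e1]; ring

lemma rep (K : ℕ) (y : ℝ) (h0 : 0 < y) (h2 : y < 1/2) :
    y - 1/2 + SS K y
      = -(1/Real.pi) * ∫ r in (0:ℝ)..1,
          r^K * (Real.sin (((K:ℝ)+1)*(2*Real.pi*y)) - r * Real.sin ((K:ℝ)*(2*Real.pi*y)))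
            / (1 - 2*r*Real.cos (2*Real.pi*y) + r^2) := by
  set θ : ℝ := 2*Real.pi*y with hθ
  have hpi := Real.pi_pos
  have hθ1 : 0 < θ := by positivity
  have hθ2 : θ < Real.pi := by rw [hθ]; nlinarith
  have hs : 0 < Real.sin θ := Real.sin_pos_of_pos_of_lt_pi hθ1 hθ2
  have hQ : ∀ r : ℝ, 0 < 1 - 2*r*Real.cos θ + r^2 := by
    intro r
    nlinarith [sq_nonneg (r - Real.cos θ), Real.sin_sq_add_cos_sq θ, hs]
  have stepA : SS K y = (1/Real.pi) * ∑ k ∈ Finset.Icc 1 K, Real.sin ((k:ℝ)*θ)/(k:ℝ) := by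
    unfold SS
    rw [Finset.mul_sum]
    refine Finset.sum_congr rfl fun k hk => ?_
    have hk1 : (1:ℕ) ≤ k := (Finset.mem_Icc.mp hk).1
    have hkpos : (0:ℝ) < k := by exact_mod_cast hk1
    rw [show 2*Real.pi*(k:ℝ)*y = (k:ℝ)*θ by rw [hθ]; ring]
    field_simp
  have stepB : ∀ k ∈ Finset.Icc 1 K, Real.sin ((k:ℝ)*θ)/(k:ℝ)
      = ∫ r in (0:ℝ)..1, r^(k-1) * Real.sin ((k:ℝ)*θ) := by
    intro k hk
    have hk1 : (1:ℕ) ≤ k := (Finset.mem_Icc.mp hk).1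
    have hkpos : (0:ℝ) < k := by exact_mod_cast hk1
    rw [intervalIntegral.integral_mul_const, integral_pow]
    have hc : ((k-1:ℕ):ℝ) = (k:ℝ)-1 := by
      push_cast [hk1]; ring
    rw [hc]
    norm_num
    ring
  have stepC : ∑ k ∈ Finset.Icc 1 K, (∫ r in (0:ℝ)..1, r^(k-1) * Real.sin ((k:ℝ)*θ))
      = ∫ r in (0:ℝ)..1, ∑ k ∈ Finset.Icc 1 K, r^(k-1) * Real.sin ((k:ℝ)*θ) := by
    rw [intervalIntegral.integral_finset_sum]
    intro k _
    exact ((continuous_pow (k-1)).mul continuous_const).intervalIntegrable 0 1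
  have stepD : (∫ r in (0:ℝ)..1, ∑ k ∈ Finset.Icc 1 K, r^(k-1) * Real.sin ((k:ℝ)*θ))
      = ∫ r in (0:ℝ)..1,
          (Real.sin θ / (1 - 2*r*Real.cos θ + r^2)
            - r^K * (Real.sin (((K:ℝ)+1)*θ) - r * Real.sin ((K:ℝ)*θ))
                / (1 - 2*r*Real.cos θ + r^2)) := by
    refine intervalIntegral.integral_congr fun r _ => ?_
    have hg := geom θ r K
    have hQr := (hQ r).ne'
    rw [← sub_div, eq_div_iff hQr]
    linear_combination hg
  have stepE : (∫ r in (0:ℝ)..1,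
          (Real.sin θ / (1 - 2*r*Real.cos θ + r^2)
            - r^K * (Real.sin (((K:ℝ)+1)*θ) - r * Real.sin ((K:ℝ)*θ))
                / (1 - 2*r*Real.cos θ + r^2)))
      = (∫ r in (0:ℝ)..1, Real.sin θ / (1 - 2*r*Real.cos θ + r^2))
        - ∫ r in (0:ℝ)..1, r^K * (Real.sin (((K:ℝ)+1)*θ) - r * Real.sin ((K:ℝ)*θ))
                / (1 - 2*r*Real.cos θ + r^2) := by
    apply intervalIntegral.integral_sub
    · exact (Continuous.div continuous_const (by fun_prop) fun r => (hQ r).ne').intervalIntegrable 0 1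
    · exact (Continuous.div (by fun_prop) (by fun_prop) fun r => (hQ r).ne').intervalIntegrable 0 1
  have hbase := base_int θ hθ1 hθ2
  have : SS K y = (1/Real.pi) * ((Real.pi/2 - θ/2)
      - ∫ r in (0:ℝ)..1, r^K * (Real.sin (((K:ℝ)+1)*θ) - r * Real.sin ((K:ℝ)*θ))
                / (1 - 2*r*Real.cos θ + r^2)) := by
    rw [stepA, Finset.sum_congr rfl stepB, stepC, stepD, stepE, hbase]
  rw [this, hθ]
  linear_combination (1/2 - y) * mul_inv_cancel₀ hpi.ne'

lemma pointwise_bd (K : ℕ) (hK : 1 ≤ K) (θ a r : ℝ) (hr0 : 0 ≤ r) (hr1 : r ≤ 1)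
    (hapos : 0 < a) (hcos : Real.cos θ = 1 - 2*a^2) :
    |r^K * (Real.sin (((K:ℝ)+1)*θ) - r * Real.sin ((K:ℝ)*θ)) / (1 - 2*r*Real.cos θ + r^2)|
      ≤ 1/(2*a) * r ^ ((K:ℝ) - 1/2) := by
  rcases eq_or_lt_of_le hr0 with h | hrpos
  · rw [← h, zero_pow (by omega : K ≠ 0)]
    simp
    positivity
  · set N : ℝ := Real.sin (((K:ℝ)+1)*θ) - r * Real.sin ((K:ℝ)*θ) with hN
    set Q : ℝ := 1 - 2*r*Real.cos θ + r^2 with hQdef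
    have hQ4 : 4*r*a^2 ≤ Q := by rw [hQdef, hcos]; nlinarith [sq_nonneg (1-r)]
    have hQpos : (0:ℝ) < Q := lt_of_lt_of_le (by positivity) hQ4
    have hcs : Real.cos θ
        = Real.cos (((K:ℝ)+1)*θ) * Real.cos ((K:ℝ)*θ)
          + Real.sin (((K:ℝ)+1)*θ) * Real.sin ((K:ℝ)*θ) := by
      have h := Real.cos_sub (((K:ℝ)+1)*θ) ((K:ℝ)*θ)
      rw [show ((K:ℝ)+1)*θ - (K:ℝ)*θ = θ by ring] at h
      exact h
    have hN2 : N^2 ≤ Q := by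
      rw [hN, hQdef]
      nlinarith [Real.sin_sq_add_cos_sq (((K:ℝ)+1)*θ), Real.sin_sq_add_cos_sq ((K:ℝ)*θ),
        sq_nonneg (Real.cos (((K:ℝ)+1)*θ) - r * Real.cos ((K:ℝ)*θ)), hcs]
    have habs : |N| ≤ Real.sqrt Q := Real.abs_le_sqrt hN2
    have hsq : 2*Real.sqrt r*a ≤ Real.sqrt Q := by
      have h1 : Real.sqrt (4*r*a^2) ≤ Real.sqrt Q := Real.sqrt_le_sqrt hQ4
      have h2 : Real.sqrt (4*r*a^2) = 2*Real.sqrt r*a := by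
        rw [show 4*r*a^2 = (2*Real.sqrt r*a)^2 by
          rw [mul_pow, mul_pow, Real.sq_sqrt hr0]; ring]
        exact Real.sqrt_sq (by positivity)
      linarith
    have hsqrpos : 0 < Real.sqrt r := Real.sqrt_pos.mpr hrpos
    have hsqQpos : 0 < Real.sqrt Q := lt_of_lt_of_le (by positivity) hsq
    have hrKnn : (0:ℝ) ≤ r^K := by positivity
    calc |r^K * N / Q| = r^K * |N| / Q := by
          rw [abs_div, abs_mul, abs_pow, abs_of_nonneg hr0, abs_of_pos hQpos]
    _ ≤ r^K * Real.sqrt Q / Q := by gcongr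
    _ = r^K / Real.sqrt Q := by
          rw [div_eq_div_iff hQpos.ne' hsqQpos.ne', mul_assoc, Real.mul_self_sqrt hQpos.le]
    _ ≤ r^K / (2*Real.sqrt r*a) := by gcongr
    _ = 1/(2*a) * r ^ ((K:ℝ) - 1/2) := by
          have hhalf : r ^ ((K:ℝ) - 1/2) = r ^ ((K:ℝ)) / r ^ ((1:ℝ)/2) :=
            Real.rpow_sub hrpos _ _
          have h12 : r ^ ((1:ℝ)/2) ≠ 0 := (Real.rpow_pos_of_pos hrpos _).ne'
          rw [hhalf, Real.sqrt_eq_rpow, ← Real.rpow_natCast r K]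
          field_simp

lemma bound2 (K : ℕ) (hK : 1 ≤ K) (y : ℝ) (h0 : 0 < y) (h2 : y < 1/2) :
    |y - 1/2 + SS K y| ≤ 1/((2*(K:ℝ)+1)*Real.pi*Real.sin (Real.pi*y)) := by
  have hpi := Real.pi_pos
  have hK1 : (1:ℝ) ≤ (K:ℝ) := by exact_mod_cast hK
  set a : ℝ := Real.sin (Real.pi*y) with ha
  have hapos : 0 < a :=
    Real.sin_pos_of_pos_of_lt_pi (by positivity) (by nlinarith)
  have hcos : Real.cos (2*Real.pi*y) = 1 - 2*a^2 := by
    rw [show 2*Real.pi*y = 2*(Real.pi*y) by ring, Real.cos_two_mul', ha]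
    linear_combination Real.sin_sq_add_cos_sq (Real.pi*y)
  have hsθ : 0 < Real.sin (2*Real.pi*y) :=
    Real.sin_pos_of_pos_of_lt_pi (by positivity) (by nlinarith)
  have hQ : ∀ r : ℝ, 0 < 1 - 2*r*Real.cos (2*Real.pi*y) + r^2 := by
    intro r
    nlinarith [sq_nonneg (r - Real.cos (2*Real.pi*y)), Real.sin_sq_add_cos_sq (2*Real.pi*y), hsθ]
  set e : ℝ := (K:ℝ) - 1/2 with he
  have hepos : 0 < e := by rw [he]; linarith
  have hcontI : Continuous fun r : ℝ =>
      r^K * (Real.sin (((K:ℝ)+1)*(2*Real.pi*y)) - r * Real.sin ((K:ℝ)*(2*Real.pi*y)))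
        / (1 - 2*r*Real.cos (2*Real.pi*y) + r^2) :=
    Continuous.div (by fun_prop) (by fun_prop) fun r => (hQ r).ne'
  have hcontR : Continuous fun r : ℝ => 1/(2*a) * r ^ e := by
    apply continuous_const.mul
    exact continuous_iff_continuousAt.mpr fun x =>
      Real.continuousAt_rpow_const x e (Or.inr hepos.le)
  have habs : |∫ r in (0:ℝ)..1,
      r^K * (Real.sin (((K:ℝ)+1)*(2*Real.pi*y)) - r * Real.sin ((K:ℝ)*(2*Real.pi*y)))
        / (1 - 2*r*Real.cos (2*Real.pi*y) + r^2)| ≤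
      ∫ r in (0:ℝ)..1, |r^K * (Real.sin (((K:ℝ)+1)*(2*Real.pi*y)) - r * Real.sin ((K:ℝ)*(2*Real.pi*y)))
        / (1 - 2*r*Real.cos (2*Real.pi*y) + r^2)| :=
    intervalIntegral.abs_integral_le_integral_abs (by norm_num)
  have hmono : (∫ r in (0:ℝ)..1, |r^K * (Real.sin (((K:ℝ)+1)*(2*Real.pi*y)) - r * Real.sin ((K:ℝ)*(2*Real.pi*y)))
        / (1 - 2*r*Real.cos (2*Real.pi*y) + r^2)|)
      ≤ ∫ r in (0:ℝ)..1, 1/(2*a) * r ^ e := by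
    apply intervalIntegral.integral_mono_on (by norm_num)
      (hcontI.abs.intervalIntegrable 0 1) (hcontR.intervalIntegrable 0 1)
    intro r hr
    exact pointwise_bd K hK (2*Real.pi*y) a r hr.1 hr.2 hapos hcos
  have hval : (∫ r in (0:ℝ)..1, 1/(2*a) * r ^ e) = 1/(2*a) * (1/(e+1)) := by
    rw [intervalIntegral.integral_const_mul, integral_rpow (Or.inl (by linarith))]
    rw [Real.one_rpow, Real.zero_rpow (by linarith : e + 1 ≠ 0)]
    norm_num
  rw [rep K y h0 h2]
  rw [abs_mul, abs_neg, abs_of_pos (by positivity : (0:ℝ) < 1/Real.pi)]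
  have hfin : (∫ r in (0:ℝ)..1, 1/(2*a) * r ^ e) = 1/(2*a) * (2/(2*(K:ℝ)+1)) := by
    rw [hval, he]
    congr 1
    rw [div_eq_div_iff (by linarith) (by linarith)]
    ring
  have hchain := le_trans habs (le_of_le_of_eq hmono hfin)
  calc 1/Real.pi * |∫ r in (0:ℝ)..1,
      r^K * (Real.sin (((K:ℝ)+1)*(2*Real.pi*y)) - r * Real.sin ((K:ℝ)*(2*Real.pi*y)))
        / (1 - 2*r*Real.cos (2*Real.pi*y) + r^2)|
      ≤ 1/Real.pi * (1/(2*a) * (2/(2*(K:ℝ)+1))) := by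
        apply mul_le_mul_of_nonneg_left hchain (by positivity)
  _ = 1/((2*(K:ℝ)+1)*Real.pi*a) := by
        field_simp

lemma SS_one_sub (K : ℕ) (x : ℝ) : SS K (1 - x) = -SS K x := by
  unfold SS
  rw [← Finset.sum_neg_distrib]
  refine Finset.sum_congr rfl fun k hk => ?_
  rw [show 2*Real.pi*(k:ℝ)*(1-x) = -(2*Real.pi*(k:ℝ)*x) + ((k:ℤ):ℝ)*(2*Real.pi) by
    push_cast; ring, Real.sin_add_int_mul_two_pi, Real.sin_neg]
  ring

lemma master_half (K : ℕ) (hK : 1 ≤ K) (x : ℝ) (h0 : 0 < x) (h2 : x < 1/2) :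
    |x - 1/2 + SS K x| ≤ 1/2 ∧
    |x - 1/2 + SS K x| ≤ 1/((2*(K:ℝ)+1)*Real.pi*Real.sin (Real.pi*x)) := by
  have hpi := Real.pi_pos
  have hK1 : (1:ℝ) ≤ (K:ℝ) := by exact_mod_cast hK
  have hapos : 0 < Real.sin (Real.pi*x) :=
    Real.sin_pos_of_pos_of_lt_pi (by positivity) (by nlinarith)
  have b2 := bound2 K hK x h0 h2
  refine ⟨?_, b2⟩
  by_cases hc : 1/((2*(K:ℝ)+1)*Real.pi*Real.sin (Real.pi*x)) ≤ 1/2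
  · exact b2.trans hc
  · push_neg at hc
    have hXpos : 0 < (2*(K:ℝ)+1)*Real.pi*Real.sin (Real.pi*x) := by positivity
    have hX2 : (2*(K:ℝ)+1)*Real.pi*Real.sin (Real.pi*x) < 2 := by
      rcases lt_or_ge ((2*(K:ℝ)+1)*Real.pi*Real.sin (Real.pi*x)) 2 with h | h
      · exact h
      · exfalso
        have : 1/((2*(K:ℝ)+1)*Real.pi*Real.sin (Real.pi*x)) ≤ 1/2 := by
          apply div_le_div_of_nonneg_left (by norm_num) (by norm_num) h
        linarith
    have hsin2x : 2*x ≤ Real.sin (Real.pi*x) := by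
      have := Real.mul_le_sin (x := Real.pi*x) (by positivity) (by nlinarith)
      calc 2*x = 2/Real.pi * (Real.pi*x) := by field_simp
      _ ≤ Real.sin (Real.pi*x) := this
    apply bound1_small K x h0
    nlinarith [mul_le_mul_of_nonneg_left hsin2x (le_of_lt hXpos)]

lemma master (K : ℕ) (hK : 1 ≤ K) (x : ℝ) (h0 : 0 < x) (h1 : x < 1) :
    |x - 1/2 + SS K x| ≤ 1/2 ∧
    |x - 1/2 + SS K x| ≤ 1/((2*(K:ℝ)+1)*Real.pi*|Real.sin (Real.pi*x)|) := by
  have hpi := Real.pi_pos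
  rcases lt_trichotomy x (1/2) with h | h | h
  · have hm := master_half K hK x h0 h
    have hapos : 0 < Real.sin (Real.pi*x) :=
      Real.sin_pos_of_pos_of_lt_pi (by positivity) (by nlinarith)
    rw [abs_of_pos hapos]
    exact hm
  · subst h
    rw [SS_half]
    norm_num
    positivity
  · set x' : ℝ := 1 - x with hx'
    have h0' : 0 < x' := by rw [hx']; linarith
    have h2' : x' < 1/2 := by rw [hx']; linarith
    have hm := master_half K hK x' h0' h2'
    have hE : x - 1/2 + SS K x = -(x' - 1/2 + SS K x') := by
      rw [show SS K x = SS K (1 - x') by rw [hx']; ring_nf, SS_one_sub]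
      rw [hx']; ring
    have hs : Real.sin (Real.pi*x) = Real.sin (Real.pi*x') := by
      rw [show Real.pi*x' = Real.pi - Real.pi*x by rw [hx']; ring, Real.sin_pi_sub]
    have hapos : 0 < Real.sin (Real.pi*x') :=
      Real.sin_pos_of_pos_of_lt_pi (by positivity) (by nlinarith)
    rw [hE, abs_neg, hs, abs_of_pos hapos]
    exact hm

/-- for every positive `K` and real `y`,
`|∑_{k=1}^K sin(2πky)/(πk) + ψ(y)| ≤ min(1/2, 1/((2K+1)π|sin(πy)|))`
(the second bound being interpreted as `+∞` when `sin(πy) = 0`). -/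
theorem stmt_13 (K : ℕ) (hK : 1 ≤ K) (y : ℝ) :
    |(∑ k ∈ Finset.Icc 1 K, Real.sin (2 * Real.pi * k * y) / (Real.pi * k)) +
        sawtooth y| ≤ 1 / 2 ∧
    (Real.sin (Real.pi * y) ≠ 0 →
      |(∑ k ∈ Finset.Icc 1 K, Real.sin (2 * Real.pi * k * y) / (Real.pi * k)) +
          sawtooth y| ≤
        1 / ((2 * K + 1) * Real.pi * |Real.sin (Real.pi * y)|)) := by
  by_cases hint : ∃ m : ℤ, y = (m : ℝ)
  · obtain ⟨m, rfl⟩ := hint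
    have hsum : (∑ k ∈ Finset.Icc 1 K, Real.sin (2 * Real.pi * k * (m:ℝ)) / (Real.pi * k)) = 0 := by
      apply Finset.sum_eq_zero
      intro k hk
      rw [show 2 * Real.pi * (k:ℝ) * (m:ℝ) = ((2*k*m : ℤ):ℝ) * Real.pi by push_cast; ring,
        Real.sin_int_mul_pi]
      simp
    have hsaw : sawtooth (m:ℝ) = 0 := by
      rw [sawtooth, if_pos ⟨m, rfl⟩]
    rw [hsum, hsaw]
    constructor
    · norm_num
    · intro hsin
      exfalso
      apply hsin
      rw [show Real.pi * (m:ℝ) = ((m:ℤ):ℝ) * Real.pi by push_cast; ring, Real.sin_int_mul_pi]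
  · have hsaw : sawtooth y = Int.fract y - 1/2 := by rw [sawtooth, if_neg hint]
    set x : ℝ := Int.fract y with hxdef
    have hx0 : 0 < x := by
      rw [hxdef]
      apply Int.fract_pos.mpr
      intro hy
      exact hint ⟨⌊y⌋, hy⟩
    have hx1 : x < 1 := Int.fract_lt_one y
    have hfl : (↑⌊y⌋ : ℝ) + x = y := Int.floor_add_fract y
    have hsum : (∑ k ∈ Finset.Icc 1 K, Real.sin (2 * Real.pi * k * y) / (Real.pi * k))
        = SS K x := by
      unfold SS
      refine Finset.sum_congr rfl fun k hk => ?_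
      rw [show 2 * Real.pi * (k:ℝ) * y
          = 2 * Real.pi * (k:ℝ) * x + ((k*⌊y⌋ : ℤ):ℝ) * (2*Real.pi) by
        push_cast; linear_combination (2 * Real.pi * (k:ℝ)) * hfl.symm,
        Real.sin_add_int_mul_two_pi]
    have habs : |Real.sin (Real.pi * y)| = |Real.sin (Real.pi * x)| := by
      rw [show Real.pi * y = Real.pi * x + (⌊y⌋:ℝ) * Real.pi by
        linear_combination Real.pi * hfl.symm,
        Real.sin_add_int_mul_pi, abs_mul]
      have : |(-1 : ℝ) ^ ⌊y⌋| = 1 := by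
        rcases Int.even_or_odd ⌊y⌋ with he | ho
        · rw [he.neg_one_zpow]; norm_num
        · rw [Odd.neg_one_zpow ho]; norm_num
      rw [this, one_mul]
    have hm := master K hK x hx0 hx1
    have hE : (∑ k ∈ Finset.Icc 1 K, Real.sin (2 * Real.pi * k * y) / (Real.pi * k)) +
        sawtooth y = x - 1/2 + SS K x := by
      rw [hsum, hsaw]; ring
    rw [hE, habs]
    exact ⟨hm.1, fun _ => hm.2⟩
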